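/- Let m > 3/2 and K > 0 be real constants, let h : [0,∞) → ℝ be continuous with |h(r)| ≤ K e^{(2−m)r} for all r ≥ 0, and let f : [0,∞) → ℝ be a C² function satisfying f''(r) − (1/4) f(r) = h(r) for all r ≥ 0. Then the quantity α := (1/2)f(0) + f'(0) + ∫₀^∞ e^{-s/2} h(s) ds is well defined (the integral converges absolutely), and there exists a constant c > 0 depending only on K, m, |f(0)| and |f'(0)| such that for all r ≥ 0: |f(r) − α e^{r/2}| ≤ c·ρ(r), where ρ(r) = e^{(2−m)r} if 3/2 < m < 5/2, ρ(r) = (r+1)e^{-r/2} if m = 5/2, and ρ(r) = e^{-r/2} if m > 5/2. -/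

import Mathlib

open Real MeasureTheory Set Filter Topology



/-- Integral of a decaying exponential on a half-line. -/
lemma aux_integral_exp_Ioi {b : ℝ} (hb : 0 < b) (s : ℝ) :
    ∫ t in Set.Ioi s, Real.exp (-b * t) = Real.exp (-b * s) / b := by
  have H : ∀ t ∈ Set.Ici s, HasDerivAt (fun t => -(Real.exp (-b * t) / b))
      (Real.exp (-b * t)) t := by
    intro t _
    have h1 : HasDerivAt (fun t : ℝ => -b * t) (-b) t := by
      simpa using (hasDerivAt_id t).const_mul (-b)
    have h3 := (h1.exp.div_const b).neg
    refine h3.congr_deriv (Eq.symm ?_)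
    field_simp
  have hint : IntegrableOn (fun t => Real.exp (-b * t)) (Set.Ioi s) :=
    exp_neg_integrableOn_Ioi s hb
  have htend : Tendsto (fun t => -(Real.exp (-b * t) / b)) atTop (𝓝 0) := by
    have h0 : Tendsto (fun t : ℝ => Real.exp (-(b * t))) atTop (𝓝 0) :=
      tendsto_exp_neg_atTop_nhds_zero.comp (tendsto_id.const_mul_atTop hb)
    have : Tendsto (fun t : ℝ => -(Real.exp (-b * t) / b)) atTop (𝓝 (-(0 / b))) := by
      apply Tendsto.neg
      apply Tendsto.div_const
      simpa [neg_mul] using h0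
    simpa using this
  have := MeasureTheory.integral_Ioi_of_hasDerivAt_of_tendsto' H hint htend
  rw [this]
  ring

/-- Interval integral of an exponential. -/
lemma aux_integral_exp_interval {a : ℝ} (ha : a ≠ 0) (r : ℝ) :
    ∫ s in (0:ℝ)..r, Real.exp (a * s) = (Real.exp (a * r) - 1) / a := by
  have H : ∀ x ∈ Set.uIcc (0:ℝ) r, HasDerivAt (fun s => Real.exp (a * s) / a)
      (Real.exp (a * x)) x := by
    intro x _
    have h1 : HasDerivAt (fun s : ℝ => a * s) a x := by
      simpa using (hasDerivAt_id x).const_mul a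
    have h2 := h1.exp.div_const a
    refine h2.congr_deriv (Eq.symm ?_)
    field_simp
  have hint : IntervalIntegrable (fun s => Real.exp (a * s)) volume 0 r :=
    (Real.continuous_exp.comp (continuous_const.mul continuous_id)).intervalIntegrable 0 r
  rw [intervalIntegral.integral_eq_sub_of_hasDerivAt H hint]
  simp [sub_div]



set_option maxHeartbeats 1600000 in
/-- The analytic core of Proposition 4.9 of the paper: if `f'' - (1/4) f = h` on `[0,∞)`
with `|h(r)| ≤ K e^{(2-m)r}`, `m > 3/2`, then `f(r) - α e^{r/2}` decays with explicit rate,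
where `α = (1/2) f(0) + f'(0) + ∫₀^∞ e^{-s/2} h(s) ds`, with a constant depending only on
`K`, `m`, `|f(0)|` and `|f'(0)|`. -/
theorem stmt6 (m K F0 F1 : ℝ) (hm : 3 / 2 < m) (hK : 0 < K) :
    ∃ c > (0:ℝ), ∀ f h : ℝ → ℝ, ContDiff ℝ 2 f → Continuous h →
      (∀ r ≥ (0:ℝ), |h r| ≤ K * Real.exp ((2 - m) * r)) →
      (∀ r ≥ (0:ℝ), deriv (deriv f) r - (1 / 4) * f r = h r) →
      |f 0| ≤ F0 → |deriv f 0| ≤ F1 →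
      IntegrableOn (fun s => Real.exp (-s / 2) * h s) (Set.Ici (0:ℝ)) ∧
      ∀ r ≥ (0:ℝ),
        |f r - (1 / 2 * f 0 + deriv f 0 + ∫ s in Set.Ici (0:ℝ), Real.exp (-s / 2) * h s) *
            Real.exp (r / 2)| ≤
          c * (if m < 5 / 2 then Real.exp ((2 - m) * r)
               else if m = 5 / 2 then (r + 1) * Real.exp (-r / 2)
               else Real.exp (-r / 2)) := by
  have hm32 : 0 < m - 3 / 2 := by linarith
  set C1 : ℝ := K / (m - 3 / 2) with hC1def
  have hC1 : 0 < C1 := div_pos hK hm32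
  set A : ℝ := |F0| / 2 + |F1| + C1 with hAdef
  set B : ℝ := |F0| + A with hBdef
  set D : ℝ := if m = 5 / 2 then 1 else 1 / |5 / 2 - m| with hDdef
  have hD : 0 < D := by
    rcases eq_or_ne m (5 / 2) with hme | hme
    · simp [hDdef, hme]
    · have : (5:ℝ) / 2 - m ≠ 0 := sub_ne_zero.mpr (Ne.symm hme)
      simp only [hDdef, if_neg hme]
      positivity
  have hB0 : 0 ≤ B := by positivity
  clear_value C1 A B D
  refine ⟨B + C1 * D + 1, by nlinarith [mul_pos hC1 hD], ?_⟩
  intro f h hf hh hhb hode hF0 hF1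
  set φ : ℝ → ℝ := fun s => Real.exp (-s / 2) * h s with hφdef
  have hφc : Continuous φ :=
    (Real.continuous_exp.comp (continuous_id.neg.div_const 2)).mul hh
  -- pointwise bound on φ
  have hφb : ∀ s ≥ (0:ℝ), |φ s| ≤ K * Real.exp (-(m - 3 / 2) * s) := by
    intro s hs
    have h1 : |φ s| = Real.exp (-s / 2) * |h s| := by
      rw [hφdef, abs_mul, abs_of_pos (Real.exp_pos _)]
    rw [h1]
    calc Real.exp (-s / 2) * |h s| ≤ Real.exp (-s / 2) * (K * Real.exp ((2 - m) * s)) :=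
          mul_le_mul_of_nonneg_left (hhb s hs) (Real.exp_pos _).le
      _ = K * Real.exp (-(m - 3 / 2) * s) := by
          rw [mul_left_comm, ← Real.exp_add]
          congr 2
          ring
  -- integrability of φ on [0, ∞)
  have hKexpint : ∀ s : ℝ, IntegrableOn (fun t => K * Real.exp (-(m - 3 / 2) * t)) (Set.Ioi s) :=
    fun s => (exp_neg_integrableOn_Ioi s hm32).const_mul K
  have hφint : IntegrableOn φ (Set.Ici (0:ℝ)) := by
    rw [integrableOn_Ici_iff_integrableOn_Ioi]
    refine (hKexpint 0).mono' hφc.aestronglyMeasurable.restrict ?_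
    filter_upwards [ae_restrict_mem measurableSet_Ioi] with s hs
    simpa [Real.norm_eq_abs] using hφb s (le_of_lt hs)
  refine ⟨hφint, ?_⟩
  have hφIoi : ∀ s ≥ (0:ℝ), IntegrableOn φ (Set.Ioi s) := by
    intro s hs
    exact hφint.mono_set (fun x hx => le_trans hs (le_of_lt hx))
  -- the decay bound for tails
  have hRb : ∀ s ≥ (0:ℝ), |∫ t in Set.Ioi s, φ t| ≤ C1 * Real.exp (-(m - 3 / 2) * s) := by
    intro s hs
    have h1 : |∫ t in Set.Ioi s, φ t| ≤ ∫ t in Set.Ioi s, |φ t| := by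
      simpa [Real.norm_eq_abs] using
        norm_integral_le_integral_norm (μ := volume.restrict (Set.Ioi s)) φ
    have h2 : ∫ t in Set.Ioi s, |φ t| ≤ ∫ t in Set.Ioi s, K * Real.exp (-(m - 3 / 2) * t) := by
      apply setIntegral_mono_on ((hφIoi s hs).abs) (hKexpint s) measurableSet_Ioi
      intro t ht
      exact hφb t (le_trans hs (le_of_lt ht))
    have h3 : ∫ t in Set.Ioi s, K * Real.exp (-(m - 3 / 2) * t)
        = C1 * Real.exp (-(m - 3 / 2) * s) := by
      rw [integral_const_mul, aux_integral_exp_Ioi hm32]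
      rw [hC1def]
      ring
    linarith
  -- differentiability facts
  have hdf : Differentiable ℝ f := hf.differentiable (by norm_num)
  have hf2 : ContDiff ℝ (1 + 1) f := by rw [one_add_one_eq_two]; exact hf
  have hdf2c : ContDiff ℝ 1 (deriv f) := (contDiff_succ_iff_deriv.mp hf2).2.2
  have hdf2 : Differentiable ℝ (deriv f) := hdf2c.differentiable one_ne_zero
  set g : ℝ → ℝ := fun s => Real.exp (-s / 2) * (deriv f s + f s / 2) with hgdef
  have hgc : Continuous g :=
    (Real.continuous_exp.comp (continuous_id.neg.div_const 2)).mul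
      (hdf2c.continuous.add (hdf.continuous.div_const 2))
  have hg' : ∀ s, HasDerivAt g (Real.exp (-s / 2) * (deriv (deriv f) s - 1 / 4 * f s)) s := by
    intro s
    have hlin : HasDerivAt (fun s : ℝ => -s / 2) (-1 / 2) s := by
      simpa using ((hasDerivAt_id s).neg.div_const 2)
    have h1 := hlin.exp
    have h2 : HasDerivAt (fun s => deriv f s + f s / 2) (deriv (deriv f) s + deriv f s / 2) s :=
      ((hdf2 s).hasDerivAt).add ((hdf s).hasDerivAt.div_const 2)
    have h3 := h1.mul h2
    refine h3.congr_deriv (Eq.symm ?_)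
    ring
  -- primitive of φ
  set P : ℝ → ℝ := fun s => ∫ t in (0:ℝ)..s, φ t with hPdef
  have hPc : Continuous P :=
    intervalIntegral.continuous_primitive (fun a b => hφc.intervalIntegrable a b) 0
  have hgP : ∀ s ≥ (0:ℝ), g s = g 0 + P s := by
    intro s hs
    have heq : ∫ t in (0:ℝ)..s, φ t = g s - g 0 := by
      apply intervalIntegral.integral_eq_sub_of_hasDerivAt
      · intro x hx
        rw [Set.uIcc_of_le hs] at hx
        have h4 := hg' x
        rw [hode x hx.1] at h4
        exact h4
      · exact hφc.intervalIntegrable 0 s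
    have : P s = g s - g 0 := heq
    linarith
  set I : ℝ := ∫ s in Set.Ici (0:ℝ), φ s with hIdef
  set Rf : ℝ → ℝ := fun s => I - P s with hRfdef
  have hRfc : Continuous Rf := continuous_const.sub hPc
  have hRfeq : ∀ s ≥ (0:ℝ), Rf s = ∫ t in Set.Ioi s, φ t := by
    intro s hs
    have hsplit : I = P s + ∫ t in Set.Ioi s, φ t := by
      rw [hIdef, MeasureTheory.integral_Ici_eq_integral_Ioi, ← Set.Ioc_union_Ioi_eq_Ioi hs,
        MeasureTheory.setIntegral_union (Set.Ioc_disjoint_Ioi le_rfl) measurableSet_Ioi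
          (hφc.integrableOn_Ioc) (hφIoi s hs)]
      congr 1
      exact (intervalIntegral.integral_of_le hs).symm
    have : Rf s = I - P s := rfl
    rw [this, hsplit]
    ring
  have hRfb : ∀ s ≥ (0:ℝ), |Rf s| ≤ C1 * Real.exp (-(m - 3 / 2) * s) := by
    intro s hs
    rw [hRfeq s hs]
    exact hRb s hs
  set α : ℝ := 1 / 2 * f 0 + deriv f 0 + I with hαdef
  have hg0 : g 0 = deriv f 0 + f 0 / 2 := by
    have : g 0 = Real.exp (-(0:ℝ) / 2) * (deriv f 0 + f 0 / 2) := rfl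
    rw [this]
    norm_num
  have hgα : ∀ s ≥ (0:ℝ), g s = α - Rf s := by
    intro s hs
    have h1 : Rf s = I - P s := rfl
    rw [hgP s hs, hg0, h1, hαdef]
    ring
  -- bound on |α| and |f 0 - α|
  have hIb : |I| ≤ C1 := by
    have h1 : I = ∫ t in Set.Ioi (0:ℝ), φ t := by
      rw [hIdef]; exact MeasureTheory.integral_Ici_eq_integral_Ioi
    rw [h1]
    have := hRb 0 le_rfl
    simpa using this
  have hf0α : |f 0 - α| ≤ B := by
    have h1 : |α| ≤ A := by
      rw [hαdef, hAdef]
      calc |1 / 2 * f 0 + deriv f 0 + I| ≤ |1 / 2 * f 0| + |deriv f 0| + |I| := abs_add_three _ _ _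
        _ ≤ |F0| / 2 + |F1| + C1 := by
            rw [abs_mul]
            have hb1 : |f 0| ≤ |F0| := le_trans hF0 (le_abs_self F0)
            have hb2 : |deriv f 0| ≤ |F1| := le_trans hF1 (le_abs_self F1)
            have : |(1:ℝ) / 2| = 1 / 2 := by norm_num
            rw [this]
            linarith [hIb]
    calc |f 0 - α| ≤ |f 0| + |α| := abs_sub _ _
      _ ≤ |F0| + A := add_le_add (le_trans hF0 (le_abs_self F0)) h1
      _ = B := hBdef.symm
  -- second FTC step
  set u : ℝ → ℝ := fun r => Real.exp (r / 2) * f r with hudef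
  have hu' : ∀ s, HasDerivAt u (Real.exp s * g s) s := by
    intro s
    have hlin : HasDerivAt (fun s : ℝ => s / 2) (1 / 2) s := by
      simpa using (hasDerivAt_id s).div_const 2
    have h1 := hlin.exp
    have h3 := h1.mul ((hdf s).hasDerivAt)
    refine h3.congr_deriv (Eq.symm ?_)
    have hgs : g s = Real.exp (-s / 2) * (deriv f s + f s / 2) := rfl
    rw [hgs, ← mul_assoc, ← Real.exp_add]
    have he : s + -s / 2 = s / 2 := by ring
    rw [he]
    ring
  have huint : ∀ r ≥ (0:ℝ), Real.exp (r / 2) * f r = f 0 + ∫ s in (0:ℝ)..r, Real.exp s * g s := by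
    intro r hr
    have heq : ∫ s in (0:ℝ)..r, Real.exp s * g s = u r - u 0 :=
      intervalIntegral.integral_eq_sub_of_hasDerivAt (fun x _ => hu' x)
        ((Real.continuous_exp.mul hgc).intervalIntegrable 0 r)
    have hu0 : u 0 = f 0 := by
      have : u 0 = Real.exp ((0:ℝ) / 2) * f 0 := rfl
      rw [this]; norm_num
    have hur : u r = Real.exp (r / 2) * f r := rfl
    rw [heq, hu0, hur]
    ring
  have hintcong : ∀ r ≥ (0:ℝ),
      ∫ s in (0:ℝ)..r, Real.exp s * g s
        = α * (Real.exp r - 1) - ∫ s in (0:ℝ)..r, Real.exp s * Rf s := by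
    intro r hr
    have h1 : ∫ s in (0:ℝ)..r, Real.exp s * g s
        = ∫ s in (0:ℝ)..r, (α * Real.exp s - Real.exp s * Rf s) := by
      apply intervalIntegral.integral_congr
      intro x hx
      rw [Set.uIcc_of_le hr] at hx
      show Real.exp x * g x = α * Real.exp x - Real.exp x * Rf x
      rw [hgα x hx.1]
      ring
    rw [h1, intervalIntegral.integral_sub (f := fun s => α * Real.exp s) (g := fun s => Real.exp s * Rf s)
        ((continuous_const.mul Real.continuous_exp).intervalIntegrable 0 r)
        ((Real.continuous_exp.mul hRfc).intervalIntegrable 0 r),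
      intervalIntegral.integral_const_mul, integral_exp]
    norm_num
  -- the main identity
  have hmain : ∀ r ≥ (0:ℝ), f r - α * Real.exp (r / 2)
      = Real.exp (-r / 2) * (f 0 - α)
        - Real.exp (-r / 2) * ∫ s in (0:ℝ)..r, Real.exp s * Rf s := by
    intro r hr
    have e1 : Real.exp (-r / 2) * Real.exp (r / 2) = 1 := by
      rw [← Real.exp_add]
      have : -r / 2 + r / 2 = 0 := by ring
      rw [this, Real.exp_zero]
    have e2 : Real.exp (-r / 2) * Real.exp r = Real.exp (r / 2) := by
      rw [← Real.exp_add]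
      congr 1
      ring
    have h5 := huint r hr
    rw [hintcong r hr] at h5
    calc f r - α * Real.exp (r / 2)
        = Real.exp (-r / 2) * (Real.exp (r / 2) * f r) - α * Real.exp (r / 2) := by
          rw [← mul_assoc, e1, one_mul]
      _ = Real.exp (-r / 2)
            * (f 0 + (α * (Real.exp r - 1) - ∫ s in (0:ℝ)..r, Real.exp s * Rf s))
            - α * Real.exp (r / 2) := by rw [h5]
      _ = α * (Real.exp (-r / 2) * Real.exp r) - α * Real.exp (r / 2)
            + Real.exp (-r / 2) * (f 0 - α)
            - Real.exp (-r / 2) * ∫ s in (0:ℝ)..r, Real.exp s * Rf s := by ring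
      _ = Real.exp (-r / 2) * (f 0 - α)
            - Real.exp (-r / 2) * ∫ s in (0:ℝ)..r, Real.exp s * Rf s := by
          rw [e2]; ring
  -- bound on the error integral
  have hEb : ∀ r ≥ (0:ℝ), |∫ s in (0:ℝ)..r, Real.exp s * Rf s|
      ≤ |∫ s in (0:ℝ)..r, C1 * Real.exp ((5 / 2 - m) * s)| := by
    intro r hr
    have : ‖∫ s in (0:ℝ)..r, Real.exp s * Rf s‖
        ≤ |∫ s in (0:ℝ)..r, C1 * Real.exp ((5 / 2 - m) * s)| := by
      apply intervalIntegral.norm_integral_le_abs_of_norm_le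
      · filter_upwards [ae_restrict_mem measurableSet_uIoc] with t ht
        rw [Set.uIoc_of_le hr] at ht
        have ht0 : (0:ℝ) ≤ t := le_of_lt ht.1
        rw [Real.norm_eq_abs, abs_mul, abs_of_pos (Real.exp_pos _)]
        calc Real.exp t * |Rf t| ≤ Real.exp t * (C1 * Real.exp (-(m - 3 / 2) * t)) :=
              mul_le_mul_of_nonneg_left (hRfb t ht0) (Real.exp_pos _).le
          _ = C1 * Real.exp ((5 / 2 - m) * t) := by
              rw [mul_left_comm, ← Real.exp_add]
              congr 2
              ring
      · exact ((continuous_const.mul (Real.continuous_exp.comp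
          (continuous_const.mul continuous_id))).intervalIntegrable 0 r)
    simpa [Real.norm_eq_abs] using this

  -- final estimates
  clear_value u g α Rf P I
  intro r hr
  have habs : |f r - α * Real.exp (r / 2)|
      ≤ Real.exp (-r / 2) * B
        + Real.exp (-r / 2) * |∫ s in (0:ℝ)..r, Real.exp s * Rf s| := by
    rw [hmain r hr]
    have h1 : |Real.exp (-r / 2) * (f 0 - α)
          - Real.exp (-r / 2) * ∫ s in (0:ℝ)..r, Real.exp s * Rf s|
        ≤ |Real.exp (-r / 2) * (f 0 - α)|
          + |Real.exp (-r / 2) * ∫ s in (0:ℝ)..r, Real.exp s * Rf s| := abs_sub _ _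
    rw [abs_mul, abs_mul, abs_of_pos (Real.exp_pos _)] at h1
    have h2 := mul_le_mul_of_nonneg_left hf0α (Real.exp_pos (-r / 2)).le
    linarith
  have hexpnn : (0:ℝ) < Real.exp (-r / 2) := Real.exp_pos _
  rcases lt_trichotomy m (5 / 2) with hc1 | hc2 | hc3
  · -- case 3/2 < m < 5/2
    rw [if_pos hc1]
    have ha : (0:ℝ) < 5 / 2 - m := by linarith
    have hDval : D = 1 / (5 / 2 - m) := by
      rw [hDdef, if_neg (ne_of_lt hc1), abs_of_pos ha]
    have hJ : ∫ s in (0:ℝ)..r, C1 * Real.exp ((5 / 2 - m) * s)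
        = C1 * ((Real.exp ((5 / 2 - m) * r) - 1) / (5 / 2 - m)) := by
      rw [intervalIntegral.integral_const_mul, aux_integral_exp_interval (ne_of_gt ha)]
    have hq0 : (0:ℝ) ≤ (Real.exp ((5 / 2 - m) * r) - 1) / (5 / 2 - m) := by
      apply div_nonneg _ ha.le
      have := Real.one_le_exp (x := (5 / 2 - m) * r) (by positivity)
      linarith
    have hq1 : (Real.exp ((5 / 2 - m) * r) - 1) / (5 / 2 - m)
        ≤ D * Real.exp ((5 / 2 - m) * r) := by
      rw [hDval, one_div, inv_mul_eq_div]
      gcongr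
      linarith
    have hE2 : |∫ s in (0:ℝ)..r, Real.exp s * Rf s|
        ≤ C1 * (D * Real.exp ((5 / 2 - m) * r)) := by
      calc |∫ s in (0:ℝ)..r, Real.exp s * Rf s|
          ≤ |∫ s in (0:ℝ)..r, C1 * Real.exp ((5 / 2 - m) * s)| := hEb r hr
        _ = C1 * ((Real.exp ((5 / 2 - m) * r) - 1) / (5 / 2 - m)) := by
            rw [hJ, abs_of_nonneg (mul_nonneg hC1.le hq0)]
        _ ≤ C1 * (D * Real.exp ((5 / 2 - m) * r)) :=
            mul_le_mul_of_nonneg_left hq1 hC1.le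
    have e3 : Real.exp (-r / 2) * Real.exp ((5 / 2 - m) * r) = Real.exp ((2 - m) * r) := by
      rw [← Real.exp_add]; congr 1; ring
    have e4 : Real.exp (-r / 2) ≤ Real.exp ((2 - m) * r) := by
      apply Real.exp_le_exp.mpr
      nlinarith
    calc |f r - α * Real.exp (r / 2)|
        ≤ Real.exp (-r / 2) * B
          + Real.exp (-r / 2) * |∫ s in (0:ℝ)..r, Real.exp s * Rf s| := habs
      _ ≤ Real.exp (-r / 2) * B
          + Real.exp (-r / 2) * (C1 * (D * Real.exp ((5 / 2 - m) * r))) := by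
          have := mul_le_mul_of_nonneg_left hE2 hexpnn.le
          linarith
      _ = B * Real.exp (-r / 2)
          + C1 * D * (Real.exp (-r / 2) * Real.exp ((5 / 2 - m) * r)) := by ring
      _ = B * Real.exp (-r / 2) + C1 * D * Real.exp ((2 - m) * r) := by rw [e3]
      _ ≤ (B + C1 * D + 1) * Real.exp ((2 - m) * r) := by
          have h6 := mul_le_mul_of_nonneg_left e4 hB0
          nlinarith [Real.exp_pos ((2 - m) * r)]
  · -- case m = 5/2
    rw [if_neg (not_lt.mpr (le_of_eq hc2.symm)), if_pos hc2]
    have hDval : D = 1 := by rw [hDdef, if_pos hc2]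
    have hz : (5:ℝ) / 2 - m = 0 := by rw [hc2]; ring
    have hJ : ∫ s in (0:ℝ)..r, C1 * Real.exp ((5 / 2 - m) * s) = C1 * r := by
      rw [hz]
      simp [mul_comm]
    have hE2 : |∫ s in (0:ℝ)..r, Real.exp s * Rf s| ≤ C1 * r := by
      calc |∫ s in (0:ℝ)..r, Real.exp s * Rf s|
          ≤ |∫ s in (0:ℝ)..r, C1 * Real.exp ((5 / 2 - m) * s)| := hEb r hr
        _ = C1 * r := by rw [hJ, abs_of_nonneg (mul_nonneg hC1.le hr)]
    have h7 := habs
    have h8 := mul_le_mul_of_nonneg_left hE2 hexpnn.le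
    rw [hDval]
    nlinarith [mul_nonneg (mul_nonneg hexpnn.le hB0) hr, mul_pos hexpnn hC1,
      mul_nonneg hexpnn.le hr, hexpnn]
  · -- case m > 5/2
    rw [if_neg (not_lt.mpr hc3.le), if_neg (ne_of_gt hc3)]
    have ha : (5:ℝ) / 2 - m < 0 := by linarith
    have ham : (0:ℝ) < m - 5 / 2 := by linarith
    have hDval : D = 1 / (m - 5 / 2) := by
      rw [hDdef, if_neg (ne_of_gt hc3), abs_of_neg ha]
      congr 1
      ring
    have hJ : ∫ s in (0:ℝ)..r, C1 * Real.exp ((5 / 2 - m) * s)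
        = C1 * ((Real.exp ((5 / 2 - m) * r) - 1) / (5 / 2 - m)) := by
      rw [intervalIntegral.integral_const_mul, aux_integral_exp_interval (ne_of_lt ha)]
    have hkey : (Real.exp ((5 / 2 - m) * r) - 1) / (5 / 2 - m)
        = (1 - Real.exp ((5 / 2 - m) * r)) / (m - 5 / 2) := by
      rw [div_eq_div_iff (ne_of_lt ha) (ne_of_gt ham)]
      ring
    have hexple : Real.exp ((5 / 2 - m) * r) ≤ 1 :=
      Real.exp_le_one_iff.mpr (by nlinarith)
    have hq0 : (0:ℝ) ≤ (1 - Real.exp ((5 / 2 - m) * r)) / (m - 5 / 2) :=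
      div_nonneg (by linarith) ham.le
    have hq1 : (1 - Real.exp ((5 / 2 - m) * r)) / (m - 5 / 2) ≤ D := by
      rw [hDval]
      gcongr
      linarith [(Real.exp_pos ((5 / 2 - m) * r)).le]
    have hE2 : |∫ s in (0:ℝ)..r, Real.exp s * Rf s| ≤ C1 * D := by
      calc |∫ s in (0:ℝ)..r, Real.exp s * Rf s|
          ≤ |∫ s in (0:ℝ)..r, C1 * Real.exp ((5 / 2 - m) * s)| := hEb r hr
        _ = C1 * ((1 - Real.exp ((5 / 2 - m) * r)) / (m - 5 / 2)) := by
            rw [hJ, hkey, abs_of_nonneg (mul_nonneg hC1.le hq0)]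
        _ ≤ C1 * D := mul_le_mul_of_nonneg_left hq1 hC1.le
    have h8 := mul_le_mul_of_nonneg_left hE2 hexpnn.le
    nlinarith [Real.exp_pos (-r / 2), hB0]
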